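/- Let p : E → C and q : F → D be functors, let Φ̇ : E → E be a lifting of Φ : C → C along p (i.e. Φ∘p = p∘Φ̇), and let an adjunction (L̇ ⊣ Ṙ, η̇, ε̇) : E ⇄ F be a lifting of an adjunction (L ⊣ R, η, ε) : C ⇄ D along p, q (i.e. L∘p = q∘L̇, R∘q = p∘Ṙ, ηp = pη̇, εq = qε̇). Then the adjoint equivalence (Alg_{L̇,α̇} ⊣ Alg_{Ṙ,β̇}, η̇, ε̇) : Alg(Φ̇)|Fix_η̇(E) ⇄ Alg(L̇Φ̇Ṙ)|Fix_ε̇(F) obtained for Φ̇ and (L̇ ⊣ Ṙ) is a lifting along Alg(p), Alg(q) of the adjoint equivalence (Alg_{L,α} ⊣ Alg_{R,β}, η, ε) : Alg(Φ)|Fix_η(C) ⇄ Alg(LΦR)|Fix_ε(D) obtained for Φ and (L ⊣ R), where α̇ = L̇Φ̇η̇^{-1}, β̇ = η̇Φ̇Ṙ, α = LΦη^{-1}, β = ηΦR, and Alg(p) sends a Φ̇-algebra (X, a) to the Φ-algebra (pX, pa). -/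

import Mathlib

/-!
STATEMENT 5: Let `p : E → C` and `q : F → D` be functors, let `Φ̇ : E → E` be a lifting of
`Φ : C → C` along `p` (i.e. `Φ∘p = p∘Φ̇`), and let an adjunction `(L̇ ⊣ Ṙ, η̇, ε̇) : E ⇄ F` be a
lifting of an adjunction `(L ⊣ R, η, ε) : C ⇄ D` along `p, q` (i.e. `L∘p = q∘L̇`, `R∘q = p∘Ṙ`,
`ηp = pη̇`, `εq = qε̇`).  Then the adjoint equivalence
`(Alg_{L̇,α̇} ⊣ Alg_{Ṙ,β̇}, η̇, ε̇) : Alg(Φ̇)|Fix_η̇(E) ⇄ Alg(L̇Φ̇Ṙ)|Fix_ε̇(F)` obtained for `Φ̇` and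
`(L̇ ⊣ Ṙ)` is a lifting along `Alg(p), Alg(q)` of the adjoint equivalence
`(Alg_{L,α} ⊣ Alg_{R,β}, η, ε) : Alg(Φ)|Fix_η(C) ⇄ Alg(LΦR)|Fix_ε(D)` obtained for `Φ` and
`(L ⊣ R)`, where `α̇ = L̇Φ̇η̇⁻¹`, `β̇ = η̇Φ̇Ṙ`, `α = LΦη⁻¹`, `β = ηΦR`, and `Alg(p)` sends a
`Φ̇`-algebra `(X, a)` to the `Φ`-algebra `(pX, pa)`.
-/

open CategoryTheory CategoryTheory.Limits

universe v₁ v₂ v₃ v₄ u₁ u₂ u₃ u₄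

variable {C : Type u₁} [Category.{v₁} C] {D : Type u₂} [Category.{v₂} D]
  {E : Type u₃} [Category.{v₃} E] {F : Type u₄} [Category.{v₄} F]

/-- The restriction of the category of `Φ`-algebras to the full subcategory given by `P`. -/
abbrev AlgSub {C' : Type u₁} [Category.{v₁} C'] (Φ : C' ⥤ C') (P : C' → Prop) :=
  ObjectProperty.FullSubcategory (fun A : Endofunctor.Algebra Φ => P A.a)

/-- The lifted functor `Alg_{L,α}` sending `(X, a)` to `(LX, La ∘ α_X)` and `f` to `Lf`. -/
def algMap {C' : Type u₁} [Category.{v₁} C'] {D' : Type u₂} [Category.{v₂} D']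
    (Φ : C' ⥤ C') (Ψ : D' ⥤ D') (P : C' → Prop) (Q : D' → Prop)
    (L : C' ⥤ D') (hL : ∀ X : C', P X → Q (L.obj X))
    (α : ObjectProperty.ι P ⋙ L ⋙ Ψ ⟶ ObjectProperty.ι P ⋙ Φ ⋙ L) :
    AlgSub Φ P ⥤ AlgSub Ψ Q where
  obj A := ⟨⟨L.obj A.obj.a, α.app ⟨A.obj.a, A.property⟩ ≫ L.map A.obj.str⟩, hL _ A.property⟩
  map {A B} f := ⟨
    { f := L.map (Endofunctor.Algebra.Hom.f f.hom)
      h := by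
        have hn := α.naturality (X := ⟨A.obj.a, A.property⟩) (Y := ⟨B.obj.a, B.property⟩)
          ⟨Endofunctor.Algebra.Hom.f f.hom⟩
        have hf := Endofunctor.Algebra.Hom.h f.hom
        dsimp at hn ⊢
        rw [← Category.assoc, hn, Category.assoc, ← L.map_comp, hf, L.map_comp, Category.assoc] }⟩
  map_id A := by
    apply ObjectProperty.hom_ext
    apply Endofunctor.Algebra.ext
    show L.map (𝟙 A.obj.a) = 𝟙 (L.obj A.obj.a)
    simp
  map_comp {A B E} f g := by
    apply ObjectProperty.hom_ext
    apply Endofunctor.Algebra.ext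
    show L.map (Endofunctor.Algebra.Hom.f f.hom ≫ Endofunctor.Algebra.Hom.f g.hom) =
      L.map (Endofunctor.Algebra.Hom.f f.hom) ≫ L.map (Endofunctor.Algebra.Hom.f g.hom)
    simp

/-- `L` maps `Fix_η` into `Fix_ε`. -/
theorem isIso_counit_app_of_isIso_unit_app {C' : Type u₁} [Category.{v₁} C']
    {D' : Type u₂} [Category.{v₂} D'] {L : C' ⥤ D'} {R : D' ⥤ C'} (adj : L ⊣ R)
    (X : C') (h : IsIso (adj.unit.app X)) : IsIso (adj.counit.app (L.obj X)) := by
  haveI := h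
  haveI : IsIso (L.map (adj.unit.app X) ≫ adj.counit.app (L.obj X)) := by
    rw [adj.left_triangle_components X]; exact IsIso.id _
  exact IsIso.of_isIso_comp_left (L.map (adj.unit.app X)) (adj.counit.app (L.obj X))

/-- `R` maps `Fix_ε` into `Fix_η`. -/
theorem isIso_unit_app_of_isIso_counit_app {C' : Type u₁} [Category.{v₁} C']
    {D' : Type u₂} [Category.{v₂} D'] {L : C' ⥤ D'} {R : D' ⥤ C'} (adj : L ⊣ R)
    (Y : D') (h : IsIso (adj.counit.app Y)) : IsIso (adj.unit.app (R.obj Y)) := by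
  haveI := h
  haveI : IsIso (adj.unit.app (R.obj Y) ≫ R.map (adj.counit.app Y)) := by
    rw [adj.right_triangle_components Y]; exact IsIso.id _
  exact IsIso.of_isIso_comp_right (adj.unit.app (R.obj Y)) (R.map (adj.counit.app Y))

section AlgAdj

variable (Φ : C ⥤ C) {L : C ⥤ D} {R : D ⥤ C} (adj : L ⊣ R)
  (α : ObjectProperty.ι (fun X : C => IsIso (adj.unit.app X)) ⋙ L ⋙ (R ⋙ Φ ⋙ L) ⟶
       ObjectProperty.ι (fun X : C => IsIso (adj.unit.app X)) ⋙ Φ ⋙ L)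
  (hα : ∀ X : ObjectProperty.FullSubcategory (fun X : C => IsIso (adj.unit.app X)),
    α.app X = L.map (Φ.map (@CategoryTheory.inv _ _ _ _ (adj.unit.app X.obj) X.property)))
  (β : ObjectProperty.ι (fun Y : D => IsIso (adj.counit.app Y)) ⋙ R ⋙ Φ ⟶
       ObjectProperty.ι (fun Y : D => IsIso (adj.counit.app Y)) ⋙ (R ⋙ Φ ⋙ L) ⋙ R)
  (hβ : ∀ Y : ObjectProperty.FullSubcategory (fun Y : D => IsIso (adj.counit.app Y)),
    β.app Y = adj.unit.app (Φ.obj (R.obj Y.obj)))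

/-- the adjoint equivalence on algebra categories -/
def algAdj :
    algMap Φ (R ⋙ Φ ⋙ L) (fun X : C => IsIso (adj.unit.app X))
        (fun Y : D => IsIso (adj.counit.app Y)) L
        (fun X => isIso_counit_app_of_isIso_unit_app adj X) α ⊣
      algMap (R ⋙ Φ ⋙ L) Φ (fun Y : D => IsIso (adj.counit.app Y))
        (fun X : C => IsIso (adj.unit.app X)) R
        (fun Y => isIso_unit_app_of_isIso_counit_app adj Y) β where
  unit :=
  { app := fun A => ⟨
      { f := adj.unit.app A.obj.a
        h := by
          dsimp [algMap]
          rw [hα, hβ]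
          have h1 := adj.unit.naturality (Φ.map (adj.unit.app A.obj.a))
          have h2 := adj.unit.naturality A.obj.str
          dsimp at h1 h2
          simp only [Functor.comp_map, R.map_comp, ← Category.assoc, h1]
          simp only [Category.assoc, ← R.map_comp, ← L.map_comp, ← Φ.map_comp,
            IsIso.hom_inv_id, Φ.map_id, L.map_id, R.map_id, Category.id_comp]
          exact h2.symm }⟩
    naturality := fun A B f => by
      apply ObjectProperty.hom_ext
      apply Endofunctor.Algebra.ext
      exact adj.unit.naturality (Endofunctor.Algebra.Hom.f f.hom) }
  counit :=
  { app := fun B => ⟨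
      { f := adj.counit.app B.obj.a
        h := by
          dsimp [algMap]
          rw [hα, hβ]
          have h1 := adj.counit.naturality B.obj.str
          dsimp at h1
          haveI : IsIso (adj.unit.app (R.obj B.obj.a)) :=
            isIso_unit_app_of_isIso_counit_app adj _ B.property
          have h3 : R.map (adj.counit.app B.obj.a) = inv (adj.unit.app (R.obj B.obj.a)) :=
            IsIso.eq_inv_of_hom_inv_id (adj.right_triangle_components B.obj.a)
          simp only [L.map_comp, Category.assoc]
          rw [h1, ← Category.assoc (L.map (adj.unit.app _))]
          erw [adj.left_triangle_components]
          rw [h3]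
          simp }⟩
    naturality := fun A B f => by
      apply ObjectProperty.hom_ext
      apply Endofunctor.Algebra.ext
      exact adj.counit.naturality (Endofunctor.Algebra.Hom.f f.hom) }
  left_triangle_components := fun A => by
    apply ObjectProperty.hom_ext
    apply Endofunctor.Algebra.ext
    exact adj.left_triangle_components A.obj.a
  right_triangle_components := fun B => by
    apply ObjectProperty.hom_ext
    apply Endofunctor.Algebra.ext
    exact adj.right_triangle_components B.obj.a

end AlgAdj

section Lift

universe v₅ v₆ u₅ u₆
variable {C₀ : Type u₅} [Category.{v₅} C₀] {C₁ : Type u₆} [Category.{v₆} C₁]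

theorem algObj_ext {Φ : C₀ ⥤ C₀} {A B : Endofunctor.Algebra Φ}
    (h : A.a = B.a) (h' : HEq A.str B.str) : A = B := by
  cases A; cases B; cases h; cases h'; rfl

theorem algSub_ext {Φ : C₀ ⥤ C₀} {P : C₀ → Prop} {A B : AlgSub Φ P}
    (h : A.obj.a = B.obj.a) (h' : HEq A.obj.str B.obj.str) : A = B := by
  cases A; cases B; cases algObj_ext h h'; rfl

theorem algSubHom_heq {Φ : C₀ ⥤ C₀} {P : C₀ → Prop} {A B A' B' : AlgSub Φ P}
    (hA : A = A') (hB : B = B') (f : A ⟶ B) (g : A' ⟶ B')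
    (h : HEq (Endofunctor.Algebra.Hom.f f.hom) (Endofunctor.Algebra.Hom.f g.hom)) : HEq f g := by
  cases hA; cases hB; exact heq_of_eq (ObjectProperty.hom_ext _ (Endofunctor.Algebra.ext (eq_of_heq h)))

theorem map_heq (F : C₀ ⥤ C₁) {A B A' B' : C₀} (hA : A = A') (hB : B = B')
    {f : A ⟶ B} {g : A' ⟶ B'} (h : HEq f g) : HEq (F.map f) (F.map g) := by
  cases hA; cases hB; cases h; rfl

theorem comp_map_heq {C₂ : Type*} [Category C₂] {C₃ : Type*} [Category C₃]
    {F : C₀ ⥤ C₂} {G : C₂ ⥤ C₁} {H : C₀ ⥤ C₃} {K : C₃ ⥤ C₁} (hFG : F ⋙ G = H ⋙ K)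
    {X Y : C₀} (f : X ⟶ Y) : HEq (G.map (F.map f)) (K.map (H.map f)) := by
  have := Functor.congr_hom hFG f
  simp only [Functor.comp_map] at this
  rw [this]
  simp

theorem inv_heq_of_heq {W X Y : C₀} (hXY : X = Y) (f : W ⟶ X) (g : W ⟶ Y)
    [IsIso f] [IsIso g] (h : HEq f g) : HEq (inv f) (inv g) := by
  cases hXY; cases h; rfl

theorem natTrans_app_heq {Φ Ψ : C₀ ⥤ C₁} (τ : Φ ⟶ Ψ) {X X' : C₀} (h : X = X') :
    HEq (τ.app X) (τ.app X') := by cases h; rfl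

theorem isIso_of_heq {W W' X X' : C₀} (hW : W = W') (hX : X = X')
    {f : W ⟶ X} {g : W' ⟶ X'} (h : HEq f g) (hf : IsIso f) : IsIso g := by
  cases hW; cases hX; cases h; exact hf

theorem algSub_isIso {Φ : C₀ ⥤ C₀} {P : C₀ → Prop} {A B : AlgSub Φ P} (f : A ⟶ B)
    (h : IsIso (Endofunctor.Algebra.Hom.f f.hom)) : IsIso f := by
  haveI := h
  refine ⟨⟨⟨{ f := inv (Endofunctor.Algebra.Hom.f f.hom), h := ?_ }⟩, ?_, ?_⟩⟩
  · rw [Functor.map_inv, IsIso.inv_comp_eq, ← Category.assoc,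
      Endofunctor.Algebra.Hom.h f.hom, Category.assoc, IsIso.hom_inv_id, Category.comp_id]
  · apply ObjectProperty.hom_ext
    apply Endofunctor.Algebra.ext
    show Endofunctor.Algebra.Hom.f f.hom ≫ inv (Endofunctor.Algebra.Hom.f f.hom) = 𝟙 _
    simp
  · apply ObjectProperty.hom_ext
    apply Endofunctor.Algebra.ext
    show inv (Endofunctor.Algebra.Hom.f f.hom) ≫ Endofunctor.Algebra.Hom.f f.hom = 𝟙 _
    simp

/-- The lifting `Alg(p)` of `p` to algebra categories. -/
def algLift (p : C₀ ⥤ C₁) (Φd : C₀ ⥤ C₀) (Φ : C₁ ⥤ C₁) (hΦ : Φd ⋙ p = p ⋙ Φ)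
    (P : C₀ → Prop) (Q : C₁ → Prop) (hPQ : ∀ X, P X → Q (p.obj X)) :
    AlgSub Φd P ⥤ AlgSub Φ Q where
  obj A := ⟨⟨p.obj A.obj.a,
      eqToHom (Functor.congr_obj hΦ A.obj.a).symm ≫ p.map A.obj.str⟩, hPQ _ A.property⟩
  map {A B} f := ⟨
    { f := p.map (Endofunctor.Algebra.Hom.f f.hom)
      h := by
        have h0 : p.map (Φd.map (Endofunctor.Algebra.Hom.f f.hom)) ≫ p.map B.obj.str =
            p.map A.obj.str ≫ p.map (Endofunctor.Algebra.Hom.f f.hom) := by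
          rw [← p.map_comp, ← p.map_comp, Endofunctor.Algebra.Hom.h f.hom]
        have h1 := Functor.congr_hom hΦ (Endofunctor.Algebra.Hom.f f.hom)
        simp only [Functor.comp_map] at h1
        rw [h1] at h0
        simp only [Category.assoc] at h0 ⊢
        rw [← h0]
        simp }⟩
  map_id A := by
    apply ObjectProperty.hom_ext
    apply Endofunctor.Algebra.ext
    show p.map (𝟙 A.obj.a) = 𝟙 (p.obj A.obj.a)
    simp
  map_comp f g := by
    apply ObjectProperty.hom_ext
    apply Endofunctor.Algebra.ext
    show p.map (_ ≫ _) = p.map _ ≫ p.map _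
    simp

end Lift

section Square

universe v₅ v₆ v₇ v₈ u₅ u₆ u₇ u₈
variable {C₀ : Type u₅} [Category.{v₅} C₀] {C₁ : Type u₆} [Category.{v₆} C₁]
  {D₀ : Type u₇} [Category.{v₇} D₀] {D₁ : Type u₈} [Category.{v₈} D₁]

theorem algSub_eqToHom_f {Φ : C₀ ⥤ C₀} {P : C₀ → Prop} {A B : AlgSub Φ P} (h : A = B) :
    Endofunctor.Algebra.Hom.f (eqToHom h).hom = eqToHom (congrArg (fun T : AlgSub Φ P => T.obj.a) h) := by
  cases h; rfl

theorem algMap_algLift_comm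
    (p : C₀ ⥤ C₁) (q : D₀ ⥤ D₁)
    (Φd : C₀ ⥤ C₀) (Ψd : D₀ ⥤ D₀) (Φ : C₁ ⥤ C₁) (Ψ : D₁ ⥤ D₁)
    (hΦ : Φd ⋙ p = p ⋙ Φ) (hΨ : Ψd ⋙ q = q ⋙ Ψ)
    (P₀ : C₀ → Prop) (Q₀ : D₀ → Prop) (P : C₁ → Prop) (Q : D₁ → Prop)
    (hP : ∀ X, P₀ X → P (p.obj X)) (hQ : ∀ Y, Q₀ Y → Q (q.obj Y))
    (Ld : C₀ ⥤ D₀) (L : C₁ ⥤ D₁) (hL : Ld ⋙ q = p ⋙ L)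
    (hLd : ∀ X, P₀ X → Q₀ (Ld.obj X)) (hLP : ∀ X, P X → Q (L.obj X))
    (αd : ObjectProperty.ι P₀ ⋙ Ld ⋙ Ψd ⟶ ObjectProperty.ι P₀ ⋙ Φd ⋙ Ld)
    (α : ObjectProperty.ι P ⋙ L ⋙ Ψ ⟶ ObjectProperty.ι P ⋙ Φ ⋙ L)
    (hc : ∀ X : ObjectProperty.FullSubcategory P₀,
      HEq (q.map (αd.app X)) (α.app ⟨p.obj X.obj, hP _ X.property⟩)) :
    algMap Φd Ψd P₀ Q₀ Ld hLd αd ⋙ algLift q Ψd Ψ hΨ Q₀ Q hQ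
      = algLift p Φd Φ hΦ P₀ P hP ⋙ algMap Φ Ψ P Q L hLP α := by
  have hobj : ∀ A : AlgSub Φd P₀,
      (algMap Φd Ψd P₀ Q₀ Ld hLd αd ⋙ algLift q Ψd Ψ hΨ Q₀ Q hQ).obj A
        = (algLift p Φd Φ hΦ P₀ P hP ⋙ algMap Φ Ψ P Q L hLP α).obj A := by
    intro A
    apply algSub_ext (Functor.congr_obj hL A.obj.a)
    show HEq (eqToHom _ ≫ q.map (αd.app ⟨A.obj.a, A.property⟩ ≫ Ld.map A.obj.str))
      (α.app ⟨p.obj A.obj.a, hP _ A.property⟩ ≫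
        L.map (eqToHom (Functor.congr_obj hΦ A.obj.a).symm ≫ p.map A.obj.str))
    rw [q.map_comp, L.map_comp, eqToHom_map L]
    refine (eqToHom_comp_heq_iff _ _ _).mpr ?_
    refine heq_comp ?e1 ?e2 ?e3 (hc ⟨A.obj.a, A.property⟩) ?h2
    · show q.obj (Ψd.obj (Ld.obj A.obj.a)) = Ψ.obj (L.obj (p.obj A.obj.a))
      have e := Functor.congr_obj hΨ (Ld.obj A.obj.a)
      have e2 := Functor.congr_obj hL A.obj.a
      dsimp at e e2
      rw [e, e2]
    · show q.obj (Ld.obj (Φd.obj A.obj.a)) = L.obj (Φ.obj (p.obj A.obj.a))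
      have e := Functor.congr_obj hL (Φd.obj A.obj.a)
      have e2 := Functor.congr_obj hΦ A.obj.a
      dsimp at e e2
      rw [e, e2]
    · exact Functor.congr_obj hL A.obj.a
    · simp only [heq_eqToHom_comp_iff]
      exact comp_map_heq hL A.obj.str
  refine CategoryTheory.Functor.ext hobj ?_
  intro A B f
  apply ObjectProperty.hom_ext
  apply Endofunctor.Algebra.ext
  show q.map (Ld.map (Endofunctor.Algebra.Hom.f f.hom)) = Endofunctor.Algebra.Hom.f
    (eqToHom (hobj A) ≫ (algLift p Φd Φ hΦ P₀ P hP ⋙ algMap Φ Ψ P Q L hLP α).map f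
      ≫ eqToHom (hobj B).symm).hom
  show q.map (Ld.map (Endofunctor.Algebra.Hom.f f.hom)) =
    Endofunctor.Algebra.Hom.f (eqToHom (hobj A)).hom ≫ L.map (p.map (Endofunctor.Algebra.Hom.f f.hom))
      ≫ Endofunctor.Algebra.Hom.f (eqToHom (hobj B).symm).hom
  rw [algSub_eqToHom_f, algSub_eqToHom_f]
  exact (conj_eqToHom_iff_heq _ _ _
    (congrArg (fun T : AlgSub Ψ Q => T.obj.a) (hobj B))).mpr (comp_map_heq hL _)

end Square

theorem stmt5
    -- the two adjunctions and the lifting data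
    (p : E ⥤ C) (q : F ⥤ D)
    (Φ : C ⥤ C) (Φd : E ⥤ E) (hΦ : Φd ⋙ p = p ⋙ Φ)
    (L : C ⥤ D) (R : D ⥤ C) (adj : L ⊣ R)
    (Ld : E ⥤ F) (Rd : F ⥤ E) (adjd : Ld ⊣ Rd)
    (hLq : Ld ⋙ q = p ⋙ L) (hRp : Rd ⋙ p = q ⋙ R)
    (hunit : ∀ X : E, HEq (p.map (adjd.unit.app X)) (adj.unit.app (p.obj X)))
    (hcounit : ∀ Y : F, HEq (q.map (adjd.counit.app Y)) (adj.counit.app (q.obj Y)))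
    -- `α = LΦη⁻¹` and `β = ηΦR`
    (α : ObjectProperty.ι (fun X : C => IsIso (adj.unit.app X)) ⋙ L ⋙ (R ⋙ Φ ⋙ L) ⟶
         ObjectProperty.ι (fun X : C => IsIso (adj.unit.app X)) ⋙ Φ ⋙ L)
    (hα : ∀ X : ObjectProperty.FullSubcategory (fun X : C => IsIso (adj.unit.app X)),
      α.app X = L.map (Φ.map (@CategoryTheory.inv _ _ _ _ (adj.unit.app X.obj) X.property)))
    (β : ObjectProperty.ι (fun Y : D => IsIso (adj.counit.app Y)) ⋙ R ⋙ Φ ⟶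
         ObjectProperty.ι (fun Y : D => IsIso (adj.counit.app Y)) ⋙ (R ⋙ Φ ⋙ L) ⋙ R)
    (hβ : ∀ Y : ObjectProperty.FullSubcategory (fun Y : D => IsIso (adj.counit.app Y)),
      β.app Y = adj.unit.app (Φ.obj (R.obj Y.obj)))
    -- `α̇ = L̇Φ̇η̇⁻¹` and `β̇ = η̇Φ̇Ṙ`
    (αd : ObjectProperty.ι (fun X : E => IsIso (adjd.unit.app X)) ⋙ Ld ⋙
            (Rd ⋙ Φd ⋙ Ld) ⟶
          ObjectProperty.ι (fun X : E => IsIso (adjd.unit.app X)) ⋙ Φd ⋙ Ld)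
    (hαd : ∀ X : ObjectProperty.FullSubcategory (fun X : E => IsIso (adjd.unit.app X)),
      αd.app X = Ld.map (Φd.map (@CategoryTheory.inv _ _ _ _ (adjd.unit.app X.obj) X.property)))
    (βd : ObjectProperty.ι (fun Y : F => IsIso (adjd.counit.app Y)) ⋙ Rd ⋙ Φd ⟶
          ObjectProperty.ι (fun Y : F => IsIso (adjd.counit.app Y)) ⋙
            (Rd ⋙ Φd ⋙ Ld) ⋙ Rd)
    (hβd : ∀ Y : ObjectProperty.FullSubcategory (fun Y : F => IsIso (adjd.counit.app Y)),
      βd.app Y = adjd.unit.app (Φd.obj (Rd.obj Y.obj))) :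
    -- the dotted adjoint equivalence ...
    ∃ adjd' : algMap Φd (Rd ⋙ Φd ⋙ Ld) (fun X : E => IsIso (adjd.unit.app X))
                (fun Y : F => IsIso (adjd.counit.app Y)) Ld
                (fun X => isIso_counit_app_of_isIso_unit_app adjd X) αd ⊣
              algMap (Rd ⋙ Φd ⋙ Ld) Φd (fun Y : F => IsIso (adjd.counit.app Y))
                (fun X : E => IsIso (adjd.unit.app X)) Rd
                (fun Y => isIso_unit_app_of_isIso_counit_app adjd Y) βd,
    -- ... and the undotted adjoint equivalence ...
    ∃ adj' : algMap Φ (R ⋙ Φ ⋙ L) (fun X : C => IsIso (adj.unit.app X))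
                (fun Y : D => IsIso (adj.counit.app Y)) L
                (fun X => isIso_counit_app_of_isIso_unit_app adj X) α ⊣
             algMap (R ⋙ Φ ⋙ L) Φ (fun Y : D => IsIso (adj.counit.app Y))
                (fun X : C => IsIso (adj.unit.app X)) R
                (fun Y => isIso_unit_app_of_isIso_counit_app adj Y) β,
    -- ... with the projection functors `Alg(p)` and `Alg(q)` restricted to the subcategories,
    ∃ Algp : AlgSub Φd (fun X : E => IsIso (adjd.unit.app X)) ⥤
             AlgSub Φ (fun X : C => IsIso (adj.unit.app X)),
    ∃ Algq : AlgSub (Rd ⋙ Φd ⋙ Ld) (fun Y : F => IsIso (adjd.counit.app Y)) ⥤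
             AlgSub (R ⋙ Φ ⋙ L) (fun Y : D => IsIso (adj.counit.app Y)),
      -- both equivalences have unit `η` (resp. `η̇`) and counit `ε` (resp. `ε̇`) and are
      -- adjoint equivalences
      (∀ A, Endofunctor.Algebra.Hom.f (adjd'.unit.app A).hom = adjd.unit.app A.obj.a) ∧
      (∀ B, Endofunctor.Algebra.Hom.f (adjd'.counit.app B).hom = adjd.counit.app B.obj.a) ∧
      IsIso adjd'.unit ∧ IsIso adjd'.counit ∧
      (∀ A, Endofunctor.Algebra.Hom.f (adj'.unit.app A).hom = adj.unit.app A.obj.a) ∧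
      (∀ B, Endofunctor.Algebra.Hom.f (adj'.counit.app B).hom = adj.counit.app B.obj.a) ∧
      IsIso adj'.unit ∧ IsIso adj'.counit ∧
      -- `Alg(p)` sends a `Φ̇`-algebra `(X, a)` to the `Φ`-algebra `(pX, pa)` (and acts as `p`
      -- on morphisms), and similarly `Alg(q)`
      (∀ A, (Algp.obj A).obj.a = p.obj A.obj.a) ∧
      (∀ A, HEq (Algp.obj A).obj.str (p.map A.obj.str)) ∧
      (∀ (A B) (f : A ⟶ B), HEq (Endofunctor.Algebra.Hom.f (Algp.map f).hom)
        (p.map (Endofunctor.Algebra.Hom.f f.hom))) ∧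
      (∀ B', (Algq.obj B').obj.a = q.obj B'.obj.a) ∧
      (∀ B', HEq (Algq.obj B').obj.str (q.map B'.obj.str)) ∧
      (∀ (B' B'') (g : B' ⟶ B''), HEq (Endofunctor.Algebra.Hom.f (Algq.map g).hom)
        (q.map (Endofunctor.Algebra.Hom.f g.hom))) ∧
      -- the dotted equivalence is a lifting of the undotted one along `Alg(p)`, `Alg(q)`:
      -- the functors commute with the projections ...
      (algMap Φd (Rd ⋙ Φd ⋙ Ld) _ _ Ld (fun X => isIso_counit_app_of_isIso_unit_app adjd X)
          αd ⋙ Algq =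
        Algp ⋙ algMap Φ (R ⋙ Φ ⋙ L) _ _ L
          (fun X => isIso_counit_app_of_isIso_unit_app adj X) α) ∧
      (algMap (Rd ⋙ Φd ⋙ Ld) Φd _ _ Rd (fun Y => isIso_unit_app_of_isIso_counit_app adjd Y)
          βd ⋙ Algp =
        Algq ⋙ algMap (R ⋙ Φ ⋙ L) Φ _ _ R
          (fun Y => isIso_unit_app_of_isIso_counit_app adj Y) β) ∧
      -- ... and the unit and counit are liftings of the unit and counit
      (∀ A, HEq (Algp.map (adjd'.unit.app A)) (adj'.unit.app (Algp.obj A))) ∧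
      (∀ B', HEq (Algq.map (adjd'.counit.app B')) (adj'.counit.app (Algq.obj B'))) := by
  have hΨ : (Rd ⋙ Φd ⋙ Ld) ⋙ q = q ⋙ (R ⋙ Φ ⋙ L) := by
    rw [Functor.assoc, Functor.assoc, hLq, ← Functor.assoc Φd p L, hΦ,
      Functor.assoc, ← Functor.assoc Rd p (Φ ⋙ L), hRp, Functor.assoc]
  have hobjRL : ∀ X : E, p.obj (Rd.obj (Ld.obj X)) = R.obj (L.obj (p.obj X)) := by
    intro X
    have e1 := Functor.congr_obj hRp (Ld.obj X)
    have e2 := Functor.congr_obj hLq X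
    dsimp at e1 e2
    rw [e1, e2]
  have hobjLR : ∀ Y : F, q.obj (Ld.obj (Rd.obj Y)) = L.obj (R.obj (q.obj Y)) := by
    intro Y
    have e1 := Functor.congr_obj hLq (Rd.obj Y)
    have e2 := Functor.congr_obj hRp Y
    dsimp at e1 e2
    rw [e1, e2]
  have hP : ∀ X : E, IsIso (adjd.unit.app X) → IsIso (adj.unit.app (p.obj X)) := by
    intro X hX
    haveI := hX
    exact isIso_of_heq rfl (hobjRL X) (hunit X) inferInstance
  have hQ : ∀ Y : F, IsIso (adjd.counit.app Y) → IsIso (adj.counit.app (q.obj Y)) := by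
    intro Y hY
    haveI := hY
    exact isIso_of_heq (hobjLR Y) rfl (hcounit Y) inferInstance
  have hc1 : ∀ X : ObjectProperty.FullSubcategory (fun X : E => IsIso (adjd.unit.app X)),
      HEq (q.map (αd.app X)) (α.app ⟨p.obj X.obj, hP _ X.property⟩) := by
    intro X
    rw [hαd X, hα ⟨p.obj X.obj, hP _ X.property⟩]
    haveI := X.property
    haveI : IsIso (adj.unit.app (p.obj X.obj)) := hP _ X.property
    have step3 : HEq (p.map (@CategoryTheory.inv _ _ _ _ (adjd.unit.app X.obj) X.property))
        (inv (adj.unit.app (p.obj X.obj))) := by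
      rw [Functor.map_inv]
      exact inv_heq_of_heq (hobjRL X.obj) _ _ (hunit X.obj)
    have step3' : HEq (Φ.map (p.map (@CategoryTheory.inv _ _ _ _ (adjd.unit.app X.obj)
        X.property))) (Φ.map (inv (adj.unit.app (p.obj X.obj)))) :=
      map_heq Φ (hobjRL X.obj) rfl step3
    have step2 : HEq (p.map (Φd.map (@CategoryTheory.inv _ _ _ _ (adjd.unit.app X.obj)
        X.property))) (Φ.map (p.map (@CategoryTheory.inv _ _ _ _ (adjd.unit.app X.obj)
        X.property))) := comp_map_heq hΦ _
    have e2 : p.obj (Φd.obj (Rd.obj (Ld.obj X.obj))) = Φ.obj (p.obj (Rd.obj (Ld.obj X.obj))) :=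
      Functor.congr_obj hΦ _
    have e3 : p.obj (Φd.obj X.obj) = Φ.obj (p.obj X.obj) := Functor.congr_obj hΦ X.obj
    exact (comp_map_heq hLq _).trans ((map_heq L e2 e3 step2).trans
      (map_heq L (congrArg Φ.obj (hobjRL X.obj)) rfl step3'))
  have hc2 : ∀ Y : ObjectProperty.FullSubcategory (fun Y : F => IsIso (adjd.counit.app Y)),
      HEq (p.map (βd.app Y)) (β.app ⟨q.obj Y.obj, hQ _ Y.property⟩) := by
    intro Y
    rw [hβd Y, hβ ⟨q.obj Y.obj, hQ _ Y.property⟩]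
    have e : p.obj (Φd.obj (Rd.obj Y.obj)) = Φ.obj (R.obj (q.obj Y.obj)) := by
      have e1 := Functor.congr_obj hΦ (Rd.obj Y.obj)
      have e2 := Functor.congr_obj hRp Y.obj
      dsimp at e1 e2
      rw [e1, e2]
    exact (hunit (Φd.obj (Rd.obj Y.obj))).trans (natTrans_app_heq adj.unit e)
  have sq1 := algMap_algLift_comm p q Φd (Rd ⋙ Φd ⋙ Ld) Φ (R ⋙ Φ ⋙ L) hΦ hΨ
    (fun X : E => IsIso (adjd.unit.app X)) (fun Y : F => IsIso (adjd.counit.app Y))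
    (fun X : C => IsIso (adj.unit.app X)) (fun Y : D => IsIso (adj.counit.app Y))
    hP hQ Ld L hLq
    (fun X => isIso_counit_app_of_isIso_unit_app adjd X)
    (fun X => isIso_counit_app_of_isIso_unit_app adj X) αd α hc1
  have sq2 := algMap_algLift_comm q p (Rd ⋙ Φd ⋙ Ld) Φd (R ⋙ Φ ⋙ L) Φ hΨ hΦ
    (fun Y : F => IsIso (adjd.counit.app Y)) (fun X : E => IsIso (adjd.unit.app X))
    (fun Y : D => IsIso (adj.counit.app Y)) (fun X : C => IsIso (adj.unit.app X))
    hQ hP Rd R hRp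
    (fun Y => isIso_unit_app_of_isIso_counit_app adjd Y)
    (fun Y => isIso_unit_app_of_isIso_counit_app adj Y) βd β hc2
  refine ⟨algAdj Φd adjd αd hαd βd hβd, algAdj Φ adj α hα β hβ,
    algLift p Φd Φ hΦ _ _ hP, algLift q (Rd ⋙ Φd ⋙ Ld) (R ⋙ Φ ⋙ L) hΨ _ _ hQ,
    fun A => rfl, fun B => rfl, ?_, ?_, fun A => rfl, fun B => rfl, ?_, ?_,
    fun A => rfl, fun A => eqToHom_comp_heq _ _, fun A B f => HEq.rfl,
    fun B' => rfl, fun B' => eqToHom_comp_heq _ _, fun B' B'' g => HEq.rfl,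
    sq1, sq2, ?_, ?_⟩
  · rw [NatTrans.isIso_iff_isIso_app]
    intro A
    exact algSub_isIso _ A.property
  · rw [NatTrans.isIso_iff_isIso_app]
    intro B
    exact algSub_isIso _ B.property
  · rw [NatTrans.isIso_iff_isIso_app]
    intro A
    exact algSub_isIso _ A.property
  · rw [NatTrans.isIso_iff_isIso_app]
    intro B
    exact algSub_isIso _ B.property
  · intro A
    refine algSubHom_heq rfl ?_ _ _ (hunit A.obj.a)
    have e1 := Functor.congr_obj sq2
      ((algMap Φd (Rd ⋙ Φd ⋙ Ld) _ _ Ld (fun X => isIso_counit_app_of_isIso_unit_app adjd X)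
        αd).obj A)
    have e2 := Functor.congr_obj sq1 A
    dsimp only [Functor.comp_obj] at e1 e2
    exact e1.trans (congrArg (algMap (R ⋙ Φ ⋙ L) Φ _ _ R
      (fun Y => isIso_unit_app_of_isIso_counit_app adj Y) β).obj e2)
  · intro B'
    refine algSubHom_heq ?_ rfl _ _ (hcounit B'.obj.a)
    have e1 := Functor.congr_obj sq1
      ((algMap (Rd ⋙ Φd ⋙ Ld) Φd _ _ Rd (fun Y => isIso_unit_app_of_isIso_counit_app adjd Y)
        βd).obj B')
    have e2 := Functor.congr_obj sq2 B'
    dsimp only [Functor.comp_obj] at e1 e2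
    exact e1.trans (congrArg (algMap Φ (R ⋙ Φ ⋙ L) _ _ L
      (fun X => isIso_counit_app_of_isIso_unit_app adj X) α).obj e2)
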